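/- arXiv:1109.3739 — 2 statements merged into one kernel-verified Lean document; each statement's English description precedes it below -/
import Mathlib

section
/- Let A be an m×n matrix over a ring, I : {1,...,k} → {1,...,m} and J : {1,...,l} → {1,...,n} injective index maps, and B a k×l matrix. Define R (m×k) by R(I(i), i) = 1, Q (l×n) by Q(j, J(j)) = 1, S (m×m) diagonal with S(I(i),I(i)) = 1 for all i and zero elsewhere, and T (n×n) diagonal with T(J(j),J(j)) = 1 for all j and zero elsewhere. Then the matrix C = A + R·B·Q − S·A·T satisfies C(I(i), J(j)) = B(i,j) for all i,j, and C(r,c) = A(r,c) whenever r is not in the image of I or c is not in the image of J. -/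
/-- Correctness of SpAsgn: C = A + R·B·Q − S·A·T assigns B to A(I,J) and leaves
the rest of A unchanged. -/
theorem spasgn_correct {𝕜 : Type*} [CommRing 𝕜] {m n k l : ℕ}
    (A : Matrix (Fin m) (Fin n) 𝕜) (B : Matrix (Fin k) (Fin l) 𝕜)
    (I : Fin k → Fin m) (J : Fin l → Fin n)
    (hI : Function.Injective I) (hJ : Function.Injective J)
    (R : Matrix (Fin m) (Fin k) 𝕜) (Q : Matrix (Fin l) (Fin n) 𝕜)
    (S : Matrix (Fin m) (Fin m) 𝕜) (T : Matrix (Fin n) (Fin n) 𝕜)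
    (hR : ∀ r i, R r i = if r = I i then 1 else 0)
    (hQ : ∀ j c, Q j c = if c = J j then 1 else 0)
    (hS : ∀ r r', S r r' = if r = r' ∧ r ∈ Set.range I then 1 else 0)
    (hT : ∀ c c', T c c' = if c = c' ∧ c ∈ Set.range J then 1 else 0)
    (C : Matrix (Fin m) (Fin n) 𝕜) (hC : C = A + R * B * Q - S * A * T) :
    (∀ i j, C (I i) (J j) = B i j) ∧
      (∀ r c, r ∉ Set.range I ∨ c ∉ Set.range J → C r c = A r c) := by
  have hRB : ∀ r j, (R * B) r j = ∑ i, (if r = I i then 1 else 0) * B i j := by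
    intro r j; simp [Matrix.mul_apply, hR]
  have hRBQ : ∀ r c, (R * B * Q) r c
      = ∑ j, ∑ i, (if r = I i then 1 else 0) * B i j * (if c = J j then 1 else 0) := by
    intro r c
    simp [Matrix.mul_apply, hRB, hQ, Finset.sum_mul]
  have hSA : ∀ r c, (S * A) r c = if r ∈ Set.range I then A r c else 0 := by
    intro r c
    simp only [Matrix.mul_apply, hS]
    rw [Finset.sum_eq_single r]
    · by_cases h : r ∈ Set.range I <;> simp [h]
    · intro b _ hb; simp [Ne.symm hb]
    · simp
  have hSAT : ∀ r c, (S * A * T) r c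
      = if r ∈ Set.range I ∧ c ∈ Set.range J then A r c else 0 := by
    intro r c
    simp only [Matrix.mul_apply, hSA, hT]
    rw [Finset.sum_eq_single c]
    · by_cases h1 : r ∈ Set.range I <;> by_cases h2 : c ∈ Set.range J <;>
        simp [h1, h2]
    · intro b _ hb; simp [hb]
    · simp
  subst hC
  constructor
  · intro i j
    simp only [Matrix.sub_apply, Matrix.add_apply, hRBQ, hSAT]
    have : (∑ j', ∑ i', (if I i = I i' then (1:𝕜) else 0) * B i' j' *
        (if J j = J j' then 1 else 0)) = B i j := by
      rw [Finset.sum_eq_single j]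
      · rw [Finset.sum_eq_single i]
        · simp
        · intro b _ hb; simp [hI.ne (Ne.symm hb)]
        · simp
      · intro b _ hb
        rw [Finset.sum_eq_zero]
        intro i' _
        simp [hJ.ne (Ne.symm hb)]
      · simp
    rw [this]
    simp
  · intro r c h
    simp only [Matrix.sub_apply, Matrix.add_apply, hRBQ, hSAT]
    have hz : (∑ j', ∑ i', (if r = I i' then (1:𝕜) else 0) * B i' j' *
        (if c = J j' then 1 else 0)) = 0 := by
      apply Finset.sum_eq_zero; intro j' _
      apply Finset.sum_eq_zero; intro i' _
      rcases h with h | h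
      · simp [show r ≠ I i' from fun e => h ⟨i', e.symm⟩]
      · simp [show c ≠ J j' from fun e => h ⟨j', e.symm⟩]
    rw [hz]
    have : ¬ (r ∈ Set.range I ∧ c ∈ Set.range J) := by tauto
    rw [if_neg this]; ring
end

section
/- Let I and J be injective index maps with images of sizes k and l respectively, and let R, Q be the corresponding 0/1 extraction matrices. For any m×n matrix A over a field, flops(R·A) + flops((R·A)·Q) ≤ 2·nnz(A). Consequently the sequential SpRef algorithm via two sparse matrix products performs O(nnz(A)) nonzero arithmetic operations. -/
/-- The two products of sequential SpRef take at most 2·nnz(A) flops. -/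
theorem spref_flops {F : Type*} [Field F] [DecidableEq F] {m n k l : ℕ}
    (I : Fin k → Fin m) (J : Fin l → Fin n)
    (hI : Function.Injective I) (hJ : Function.Injective J)
    (R : Matrix (Fin k) (Fin m) F) (Q : Matrix (Fin n) (Fin l) F)
    (hR : ∀ i t, R i t = if t = I i then 1 else 0)
    (hQ : ∀ t j, Q t j = if t = J j then 1 else 0)
    (A : Matrix (Fin m) (Fin n) F) :
    (∑ t : Fin m,
        (Finset.univ.filter fun i : Fin k => R i t ≠ 0).card *
          (Finset.univ.filter fun j : Fin n => A t j ≠ 0).card) +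
      (∑ t : Fin n,
        (Finset.univ.filter fun i : Fin k => (R * A) i t ≠ 0).card *
          (Finset.univ.filter fun j : Fin l => Q t j ≠ 0).card) ≤
      2 * (Finset.univ.filter fun p : Fin m × Fin n => A p.1 p.2 ≠ 0).card := by
  have hRA : ∀ i t, (R * A) i t = A (I i) t := by
    intro i t
    simp [Matrix.mul_apply, hR, ite_mul]
  have hrow : (Finset.univ.filter fun p : Fin m × Fin n => A p.1 p.2 ≠ 0).card =
      ∑ t : Fin m, (Finset.univ.filter fun j : Fin n => A t j ≠ 0).card := by
    simp [Finset.card_filter, Fintype.sum_prod_type]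
  have hcol : (Finset.univ.filter fun p : Fin m × Fin n => A p.1 p.2 ≠ 0).card =
      ∑ t : Fin n, (Finset.univ.filter fun s : Fin m => A s t ≠ 0).card := by
    simp only [Finset.card_filter, Fintype.sum_prod_type]
    exact Finset.sum_comm
  have h1 : (∑ t : Fin m,
        (Finset.univ.filter fun i : Fin k => R i t ≠ 0).card *
          (Finset.univ.filter fun j : Fin n => A t j ≠ 0).card) ≤
      (Finset.univ.filter fun p : Fin m × Fin n => A p.1 p.2 ≠ 0).card := by
    rw [hrow]
    apply Finset.sum_le_sum
    intro t _
    have hle : (Finset.univ.filter fun i : Fin k => R i t ≠ 0).card ≤ 1 := by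
      apply Finset.card_le_one.2
      intro a ha b hb
      simp only [Finset.mem_filter, hR] at ha hb
      apply hI
      have ha' : t = I a := by by_contra h; exact ha.2 (by simp [h])
      have hb' : t = I b := by by_contra h; exact hb.2 (by simp [h])
      rw [← ha', ← hb']
    calc _ ≤ 1 * (Finset.univ.filter fun j : Fin n => A t j ≠ 0).card :=
          Nat.mul_le_mul_right _ hle
      _ = _ := one_mul _
  have h2 : (∑ t : Fin n,
        (Finset.univ.filter fun i : Fin k => (R * A) i t ≠ 0).card *
          (Finset.univ.filter fun j : Fin l => Q t j ≠ 0).card) ≤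
      (Finset.univ.filter fun p : Fin m × Fin n => A p.1 p.2 ≠ 0).card := by
    rw [hcol]
    apply Finset.sum_le_sum
    intro t _
    have hQle : (Finset.univ.filter fun j : Fin l => Q t j ≠ 0).card ≤ 1 := by
      apply Finset.card_le_one.2
      intro a ha b hb
      simp only [Finset.mem_filter, hQ] at ha hb
      apply hJ
      have ha' : t = J a := by by_contra h; exact ha.2 (by simp [h])
      have hb' : t = J b := by by_contra h; exact hb.2 (by simp [h])
      rw [← ha', ← hb']
    have hle : (Finset.univ.filter fun i : Fin k => (R * A) i t ≠ 0).card ≤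
        (Finset.univ.filter fun s : Fin m => A s t ≠ 0).card := by
      apply Finset.card_le_card_of_injOn I
      · intro i hi
        simp only [Finset.mem_filter, hRA] at hi ⊢
        exact Finset.mem_filter.2 ⟨Finset.mem_univ _, (Finset.mem_filter.1 hi).2⟩
      · exact fun a _ b _ h => hI h
    calc _ ≤ (Finset.univ.filter fun s : Fin m => A s t ≠ 0).card * 1 :=
          Nat.mul_le_mul hle hQle
      _ = _ := mul_one _
  calc _ ≤ (Finset.univ.filter fun p : Fin m × Fin n => A p.1 p.2 ≠ 0).card +
          (Finset.univ.filter fun p : Fin m × Fin n => A p.1 p.2 ≠ 0).card :=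
        Nat.add_le_add h1 h2
    _ = _ := (two_mul _).symm
end
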